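/- arXiv:1412.1453 — 2 statements merged into one kernel-verified Lean document; each statement's English description precedes it below -/
import Mathlib

section
/- For ξ ∈ ℝ, let ψ(ξ) = −imξ + δ(√(a² − (b + iξ)²) − √(a² − b²)), where m ∈ ℝ, δ > 0, 0 < |b| < a (the normal inverse Gaussian symbol with the principal branch of the square root). Then for every λ > 1, lim_{|ξ|→∞} |ψ(ξ)|/|ξ|^λ = 0, and for λ < 1 the limit superior of |ψ(ξ)|/|ξ|^λ as |ξ|→∞ is infinite; hence the Blumenthal–Gettoor index of order 0 of ψ equals 1. -/
open Filter

lemma nig_zre (a b ξ : ℝ) : ((a ^ 2 : ℂ) - ((b : ℂ) + Complex.I * ξ) ^ 2).re = a^2 - b^2 + ξ^2 := by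
  simp [pow_two, Complex.mul_re, Complex.mul_im]; ring

lemma nig_hz0 (a b ξ : ℝ) (hb2 : b^2 < a^2) :
    ((a ^ 2 : ℂ) - ((b : ℂ) + Complex.I * ξ) ^ 2) ≠ 0 := by
  intro h
  have := congrArg Complex.re h
  rw [nig_zre] at this; simp at this; nlinarith

lemma nig_wre_sq (a b ξ : ℝ) (hb2 : b^2 < a^2) :
    ξ^2 ≤ ((((a ^ 2 : ℂ) - ((b : ℂ) + Complex.I * ξ) ^ 2) ^ ((1:ℂ)/2)).re)^2 := by
  set w := (((a ^ 2 : ℂ) - ((b : ℂ) + Complex.I * ξ) ^ 2) ^ ((1:ℂ)/2)) with hw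
  have hww : w * w = ((a ^ 2 : ℂ) - ((b : ℂ) + Complex.I * ξ) ^ 2) := by
    rw [hw, ← Complex.cpow_add _ _ (nig_hz0 a b ξ hb2)]; norm_num
  have h1 : w.re * w.re - w.im * w.im = a^2 - b^2 + ξ^2 := by
    have := congrArg Complex.re hww
    rwa [Complex.mul_re, nig_zre] at this
  nlinarith

lemma nig_wabs_le (a b ξ : ℝ) (ha : 0 ≤ a) :
    ‖((a ^ 2 : ℂ) - ((b : ℂ) + Complex.I * ξ) ^ 2) ^ ((1:ℂ)/2)‖ ≤ a + |b| + |ξ| := by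
  by_cases hz : ((a ^ 2 : ℂ) - ((b : ℂ) + Complex.I * ξ) ^ 2) = 0
  · rw [hz, Complex.zero_cpow (by norm_num)]
    simp
    positivity
  · rw [Complex.norm_cpow_of_ne_zero hz]
    simp only [Complex.div_re, Complex.one_re, Complex.div_im, Complex.one_im]
    norm_num
    rw [← Real.sqrt_eq_rpow]
    have h1 : ‖(a ^ 2 : ℂ) - ((b : ℂ) + Complex.I * ξ) ^ 2‖ ≤ (a + |b| + |ξ|)^2 := by
      calc ‖(a ^ 2 : ℂ) - ((b : ℂ) + Complex.I * ξ) ^ 2‖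
          ≤ ‖(a:ℂ) ^ 2‖ + ‖((b : ℂ) + Complex.I * ξ) ^ 2‖ := by
            apply norm_sub_le
        _ ≤ a^2 + (|b| + |ξ|)^2 := by
            rw [norm_pow, norm_pow]
            gcongr
            · simp [Complex.norm_real, _root_.abs_of_nonneg ha]
            · calc ‖(b:ℂ) + Complex.I * ξ‖
                  ≤ ‖(b:ℂ)‖ + ‖Complex.I * ξ‖ := norm_add_le _ _
                _ = |b| + |ξ| := by simp
        _ ≤ (a + |b| + |ξ|)^2 := by nlinarith [abs_nonneg b, abs_nonneg ξ]
    calc Real.sqrt (‖_‖) ≤ Real.sqrt ((a + |b| + |ξ|)^2) := Real.sqrt_le_sqrt h1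
      _ = a + |b| + |ξ| := by rw [Real.sqrt_sq (by positivity)]

/-- The normal inverse Gaussian symbol
`ψ(ξ) = −imξ + δ(√(a² − (b+iξ)²) − √(a² − b²))` has Blumenthal–Getoor index of
order 0 equal to 1: `|ψ(ξ)|/|ξ|^λ → 0` as `|ξ| → ∞` for every `λ > 1`, the limit
superior is infinite for `0 < λ < 1`, and the infimum of admissible `λ` is 1. -/
theorem nig_index (m δ a b : ℝ) (hδ : 0 < δ) (hb : 0 < |b|) (hba : |b| < a)
    (ψ : ℝ → ℂ)
    (hψ : ∀ ξ : ℝ, ψ ξ = -Complex.I * (m * ξ) +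
      (δ : ℂ) * (((a ^ 2 : ℂ) - ((b : ℂ) + Complex.I * ξ) ^ 2) ^ ((1 : ℂ) / 2) -
        (Real.sqrt (a ^ 2 - b ^ 2) : ℂ))) :
    (∀ lam : ℝ, 1 < lam →
      Tendsto (fun ξ : ℝ => ‖ψ ξ‖ / |ξ| ^ lam)
        (Filter.comap (fun ξ : ℝ => |ξ|) atTop) (nhds 0)) ∧
    (∀ lam : ℝ, 0 < lam → lam < 1 →
      Filter.limsup (fun ξ : ℝ => ((‖ψ ξ‖ / |ξ| ^ lam : ℝ) : EReal))
        (Filter.comap (fun ξ : ℝ => |ξ|) atTop) = ⊤) ∧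
    sInf {lam : ℝ | 0 < lam ∧
      Tendsto (fun ξ : ℝ => ‖ψ ξ‖ / |ξ| ^ lam)
        (Filter.comap (fun ξ : ℝ => |ξ|) atTop) (nhds 0)} = 1 := by
  have ha : 0 < a := lt_of_le_of_lt (abs_nonneg b) hba
  have hb2 : b ^ 2 < a ^ 2 := by nlinarith [sq_abs b, abs_nonneg b]
  set c₀ : ℝ := Real.sqrt (a ^ 2 - b ^ 2) with hc₀def
  have hc₀ : 0 ≤ c₀ := Real.sqrt_nonneg _
  set l : Filter ℝ := Filter.comap (fun ξ : ℝ => |ξ|) atTop with hldef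
  have habs : Tendsto (fun ξ : ℝ => |ξ|) l atTop := tendsto_comap
  have hlne : l.NeBot := neBot_of_le (tendsto_abs_atTop_atTop.le_comap)
  -- pointwise upper bound
  have hup : ∀ ξ : ℝ, ‖ψ ξ‖ ≤ (|m| + δ) * |ξ| + δ * (a + |b| + c₀) := by
    intro ξ
    rw [hψ ξ]
    calc ‖-Complex.I * (m * ξ) +
          (δ : ℂ) * (((a ^ 2 : ℂ) - ((b : ℂ) + Complex.I * ξ) ^ 2) ^ ((1 : ℂ) / 2) - (c₀ : ℂ))‖
        ≤ ‖-Complex.I * (m * ξ)‖ +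
          ‖(δ : ℂ) * (((a ^ 2 : ℂ) - ((b : ℂ) + Complex.I * ξ) ^ 2) ^ ((1 : ℂ) / 2) - (c₀ : ℂ))‖ :=
          norm_add_le _ _
      _ ≤ |m| * |ξ| + δ * ((a + |b| + |ξ|) + c₀) := by
          gcongr
          · simp [norm_mul, Complex.norm_real]
          · rw [norm_mul, Complex.norm_real, Real.norm_eq_abs, _root_.abs_of_pos hδ]
            gcongr
            calc ‖((a ^ 2 : ℂ) - ((b : ℂ) + Complex.I * ξ) ^ 2) ^ ((1 : ℂ) / 2) - (c₀ : ℂ)‖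
                ≤ ‖((a ^ 2 : ℂ) - ((b : ℂ) + Complex.I * ξ) ^ 2) ^ ((1 : ℂ) / 2)‖ +
                  ‖(c₀ : ℂ)‖ := norm_sub_le _ _
              _ ≤ (a + |b| + |ξ|) + c₀ := by
                  gcongr
                  · exact nig_wabs_le a b ξ ha.le
                  · simp [Complex.norm_real, _root_.abs_of_nonneg hc₀]
      _ = (|m| + δ) * |ξ| + δ * (a + |b| + c₀) := by ring
  -- pointwise lower bound
  have hlo : ∀ ξ : ℝ, δ * (|ξ| - c₀) ≤ ‖ψ ξ‖ := by
    intro ξ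
    set w := (((a ^ 2 : ℂ) - ((b : ℂ) + Complex.I * ξ) ^ 2) ^ ((1:ℂ)/2)) with hw
    have hre : (ψ ξ).re = δ * (w.re - c₀) := by
      rw [hψ ξ, ← hw]
      simp only [Complex.add_re, Complex.mul_re, Complex.sub_re, Complex.neg_re, Complex.neg_im,
        Complex.I_re, Complex.I_im, Complex.ofReal_re, Complex.ofReal_im, Complex.mul_im]
      ring
    have hξw : |ξ| ≤ |w.re| := by
      rw [← Real.sqrt_sq_eq_abs, ← Real.sqrt_sq_eq_abs]
      exact Real.sqrt_le_sqrt (nig_wre_sq a b ξ hb2)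
    calc δ * (|ξ| - c₀) ≤ δ * (|w.re| - c₀) := by gcongr
      _ ≤ δ * |w.re - c₀| := by
          gcongr
          calc |w.re| - c₀ = |w.re| - |c₀| := by rw [_root_.abs_of_nonneg hc₀]
            _ ≤ |w.re - c₀| := abs_sub_abs_le_abs_sub _ _
      _ = |δ * (w.re - c₀)| := by rw [abs_mul, _root_.abs_of_pos hδ]
      _ = |(ψ ξ).re| := by rw [hre]
      _ ≤ ‖ψ ξ‖ := Complex.abs_re_le_norm _
  -- part 1
  have part1 : ∀ lam : ℝ, 1 < lam →
      Tendsto (fun ξ : ℝ => ‖ψ ξ‖ / |ξ| ^ lam) l (nhds 0) := by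
    intro lam hlam
    have hg0 : Tendsto (fun t : ℝ => (|m| + δ) * t ^ (1 - lam) + (δ * (a + |b| + c₀)) * t ^ (-lam))
        atTop (nhds 0) := by
      have h1 : Tendsto (fun t : ℝ => t ^ (1 - lam)) atTop (nhds 0) := by
        have := tendsto_rpow_neg_atTop (y := lam - 1) (by linarith)
        simpa [neg_sub] using this
      have h2 : Tendsto (fun t : ℝ => t ^ (-lam)) atTop (nhds 0) :=
        tendsto_rpow_neg_atTop (by linarith)
      simpa using (h1.const_mul (|m| + δ)).add (h2.const_mul (δ * (a + |b| + c₀)))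
    have hgl : Tendsto (fun ξ : ℝ => (|m| + δ) * |ξ| ^ (1 - lam) + (δ * (a + |b| + c₀)) * |ξ| ^ (-lam))
        l (nhds 0) := hg0.comp habs
    apply tendsto_of_tendsto_of_tendsto_of_le_of_le' (tendsto_const_nhds) hgl
    · exact Eventually.of_forall fun ξ => by positivity
    · filter_upwards [habs.eventually (eventually_ge_atTop 1)] with ξ hξ
      have hξ0 : (0:ℝ) < |ξ| := by linarith
      have key : ‖ψ ξ‖ / |ξ| ^ lam ≤
          ((|m| + δ) * |ξ| + δ * (a + |b| + c₀)) / |ξ| ^ lam := by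
        gcongr
        exact hup ξ
      refine key.trans (le_of_eq ?_)
      rw [add_div, Real.rpow_sub hξ0, Real.rpow_one, Real.rpow_neg hξ0.le]
      ring
  -- divergence for lam < 1 (tendsto atTop), also used for lam = 1 bound
  have hlow_ev : ∀ lam : ℝ, lam ≤ 1 → ∀ᶠ ξ in l, (δ/2) * |ξ| ^ (1 - lam) ≤
      ‖ψ ξ‖ / |ξ| ^ lam := by
    intro lam hlam
    filter_upwards [habs.eventually (eventually_ge_atTop (max 1 (2*c₀)))] with ξ hξ
    have h1 : (1:ℝ) ≤ |ξ| := le_trans (le_max_left _ _) hξ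
    have h2 : 2*c₀ ≤ |ξ| := le_trans (le_max_right _ _) hξ
    have hξ0 : (0:ℝ) < |ξ| := by linarith
    have step1 : (δ/2) * |ξ| ≤ δ * (|ξ| - c₀) := by nlinarith
    have step2 : δ * (|ξ| - c₀) / |ξ| ^ lam ≤ ‖ψ ξ‖ / |ξ| ^ lam := by
      gcongr
      exact hlo ξ
    calc (δ/2) * |ξ| ^ (1 - lam) = (δ/2) * |ξ| / |ξ| ^ lam := by
          rw [Real.rpow_sub hξ0, Real.rpow_one]; ring
      _ ≤ δ * (|ξ| - c₀) / |ξ| ^ lam := by gcongr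
      _ ≤ ‖ψ ξ‖ / |ξ| ^ lam := step2
  have part2 : ∀ lam : ℝ, 0 < lam → lam < 1 →
      Filter.limsup (fun ξ : ℝ => ((‖ψ ξ‖ / |ξ| ^ lam : ℝ) : EReal)) l = ⊤ := by
    intro lam hlam0 hlam1
    have hdiv : Tendsto (fun ξ : ℝ => ‖ψ ξ‖ / |ξ| ^ lam) l atTop := by
      have hpow : Tendsto (fun ξ : ℝ => (δ/2) * |ξ| ^ (1 - lam)) l atTop := by
        apply Tendsto.const_mul_atTop (by positivity)
        exact (tendsto_rpow_atTop (by linarith)).comp habs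
      exact tendsto_atTop_mono' l (hlow_ev lam hlam1.le) hpow
    have htop : Tendsto (fun ξ : ℝ => ((‖ψ ξ‖ / |ξ| ^ lam : ℝ) : EReal)) l (nhds ⊤) := by
      rw [EReal.tendsto_nhds_top_iff_real]
      intro x
      filter_upwards [hdiv.eventually (eventually_gt_atTop x)] with ξ hξ
      exact_mod_cast hξ
    exact htop.limsup_eq
  refine ⟨part1, part2, ?_⟩
  have hS : {lam : ℝ | 0 < lam ∧
      Tendsto (fun ξ : ℝ => ‖ψ ξ‖ / |ξ| ^ lam) l (nhds 0)} = Set.Ioi 1 := by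
    ext lam
    simp only [Set.mem_setOf_eq, Set.mem_Ioi]
    constructor
    · rintro ⟨hpos, hT⟩
      by_contra hle
      push_neg at hle
      have hev : ∀ᶠ ξ in l, δ/2 ≤ ‖ψ ξ‖ / |ξ| ^ lam := by
        filter_upwards [hlow_ev lam hle, habs.eventually (eventually_ge_atTop 1)] with ξ h1 h2
        have : (1:ℝ) ≤ |ξ| ^ (1 - lam) := Real.one_le_rpow h2 (by linarith)
        nlinarith
      have : δ/2 ≤ 0 := ge_of_tendsto hT hev
      linarith
    · intro hlam
      exact ⟨by linarith, part1 lam hlam⟩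
  rw [hS]
  exact csInf_Ioi
end

section
/- Let k ∈ ℕ and R > 0, and let h : ℝ^d → ℝ be a C^k function with h(0) = 0, h(x) = 1 for |x| ≥ R, ‖h‖_{C^k_b} ≤ 1, and |∂^α h(x)| ≤ |x|^{k − |α| + 1} for all multi-indices |α| ≤ k. Let ψ ∈ C^k(ℝ^d \ {0}) satisfy sup_{0 < |ξ| ≤ 1} |ξ|^{|α| − γ} |∂^α ψ(ξ)| < ∞ for some γ > 0 and all |α| ≤ k, and sup_{|ξ| ≥ 1} ⟨ξ⟩^{|α| − s} |∂^α ψ(ξ)| < ∞ for some s > 0. Define ψ_n(ξ) := h(nξ) ψ(ξ). Then for every multi-index α with |α| ≤ k, sup_{ξ ≠ 0} |ξ|^{|α|} |∂^α(ψ_n(ξ) − ψ(ξ))| → 0 as n → ∞. -/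
/-- Iterated partial derivative along a list of coordinate directions
(a list `[i₁, …, iₘ]` encodes the multi-index derivative `∂_{x_{i₁}} ⋯ ∂_{x_{iₘ}}`). -/
noncomputable def mpartial {d : ℕ} {F : Type*} [NormedAddCommGroup F] [NormedSpace ℝ F] :
    List (Fin d) → (EuclideanSpace ℝ (Fin d) → F) → EuclideanSpace ℝ (Fin d) → F
  | [], f => f
  | (i :: l), f => mpartial l (fun y => fderiv ℝ f y (EuclideanSpace.single i 1))

variable {d : ℕ}

def splits {d : ℕ} : List (Fin d) → List (List (Fin d) × List (Fin d))
  | [] => [([], [])]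
  | (i :: l) => (splits l).map (fun p => (i :: p.1, p.2)) ++ (splits l).map (fun p => (p.1, i :: p.2))

lemma splits_len {l : List (Fin d)} : ∀ p ∈ splits l, p.1.length + p.2.length = l.length := by
  induction l with
  | nil => simp [splits]
  | cons i l ih =>
    intro p hp
    simp only [splits, List.mem_append, List.mem_map] at hp
    rcases hp with ⟨q, hq, rfl⟩ | ⟨q, hq, rfl⟩ <;>
      · have := ih q hq; simp only [List.length_cons]; omega

lemma mpartial_cons {F : Type*} [NormedAddCommGroup F] [NormedSpace ℝ F]
    (i : Fin d) (l : List (Fin d)) (f : EuclideanSpace ℝ (Fin d) → F) :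
    mpartial (i :: l) f =
      mpartial l (fun y => fderiv ℝ f y (EuclideanSpace.single i (1:ℝ))) := rfl

lemma mpartial_congr_open {F : Type*} [NormedAddCommGroup F] [NormedSpace ℝ F]
    {U : Set (EuclideanSpace ℝ (Fin d))} (hU : IsOpen U) :
    ∀ (l : List (Fin d)) (f g : EuclideanSpace ℝ (Fin d) → F), (∀ x ∈ U, f x = g x) →
      ∀ x ∈ U, mpartial l f x = mpartial l g x := by
  intro l
  induction l with
  | nil => intro f g hfg x hx; exact hfg x hx
  | cons i l ih =>
    intro f g hfg x hx
    rw [mpartial_cons, mpartial_cons]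
    apply ih _ _ _ x hx
    intro y hy
    have : f =ᶠ[nhds y] g := Filter.eventuallyEq_of_mem (hU.mem_nhds hy) hfg
    rw [this.fderiv_eq]

lemma mpartial_zero {F : Type*} [NormedAddCommGroup F] [NormedSpace ℝ F]
    (l : List (Fin d)) (x : EuclideanSpace ℝ (Fin d)) :
    mpartial l (fun _ => (0 : F)) x = 0 := by
  induction l generalizing x with
  | nil => rfl
  | cons i l ih =>
    rw [mpartial_cons]
    have : (fun y : EuclideanSpace ℝ (Fin d) =>
        fderiv ℝ (fun _ : EuclideanSpace ℝ (Fin d) => (0:F)) y (EuclideanSpace.single i (1:ℝ)))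
        = fun _ => (0:F) := by funext y; simp
    rw [this]; exact ih x

lemma fderiv_contDiffOn_open {U : Set (EuclideanSpace ℝ (Fin d))} (hU : IsOpen U)
    {f : EuclideanSpace ℝ (Fin d) → ℂ} {m : ℕ} (hf : ContDiffOn ℝ (m + 1 : ℕ) f U)
    (v : EuclideanSpace ℝ (Fin d)) :
    ContDiffOn ℝ (m : ℕ) (fun y => fderiv ℝ f y v) U := by
  have h1 : ContDiffOn ℝ (m : ℕ) (fderiv ℝ f) U := by
    apply hf.fderiv_of_isOpen hU
    push_cast
    exact le_refl _
  exact h1.clm_apply contDiffOn_const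

lemma diffAt_of_contDiffOn_open {U : Set (EuclideanSpace ℝ (Fin d))} (hU : IsOpen U)
    {f : EuclideanSpace ℝ (Fin d) → ℂ} {m : ℕ} (hf : ContDiffOn ℝ (m + 1 : ℕ) f U)
    {y : EuclideanSpace ℝ (Fin d)} (hy : y ∈ U) : DifferentiableAt ℝ f y := by
  refine (hf.contDiffAt (hU.mem_nhds hy)).differentiableAt ?_
  simp

lemma mpartial_add_open {U : Set (EuclideanSpace ℝ (Fin d))} (hU : IsOpen U) :
    ∀ (l : List (Fin d)) (f g : EuclideanSpace ℝ (Fin d) → ℂ),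
      ContDiffOn ℝ (l.length : ℕ) f U → ContDiffOn ℝ (l.length : ℕ) g U →
      ∀ x ∈ U, mpartial l (fun y => f y + g y) x = mpartial l f x + mpartial l g x := by
  intro l
  induction l with
  | nil => intro f g _ _ x _; rfl
  | cons i l ih =>
    intro f g hf hg x hx
    have hf' : ContDiffOn ℝ (l.length + 1 : ℕ) f U := by exact_mod_cast hf
    have hg' : ContDiffOn ℝ (l.length + 1 : ℕ) g U := by exact_mod_cast hg
    rw [mpartial_cons, mpartial_cons, mpartial_cons]
    set v := EuclideanSpace.single i (1:ℝ) with hv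
    have key : ∀ y ∈ U, fderiv ℝ (fun y => f y + g y) y v
        = fderiv ℝ f y v + fderiv ℝ g y v := by
      intro y hy
      rw [fderiv_fun_add (diffAt_of_contDiffOn_open hU hf' hy) (diffAt_of_contDiffOn_open hU hg' hy)]
      rfl
    calc mpartial l (fun y => fderiv ℝ (fun y => f y + g y) y v) x
        = mpartial l (fun y => fderiv ℝ f y v + fderiv ℝ g y v) x :=
          mpartial_congr_open hU l _ _ key x hx
      _ = _ := ih _ _ (fderiv_contDiffOn_open hU hf' v) (fderiv_contDiffOn_open hU hg' v) x hx

lemma mpartial_mul_open {U : Set (EuclideanSpace ℝ (Fin d))} (hU : IsOpen U) :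
    ∀ (l : List (Fin d)) (f g : EuclideanSpace ℝ (Fin d) → ℂ),
      ContDiffOn ℝ (l.length : ℕ) f U → ContDiffOn ℝ (l.length : ℕ) g U →
      ∀ x ∈ U, mpartial l (fun y => f y * g y) x
        = ((splits l).map (fun p => mpartial p.1 f x * mpartial p.2 g x)).sum := by
  intro l
  induction l with
  | nil => intro f g _ _ x _; simp [splits]; rfl
  | cons i l ih =>
    intro f g hf hg x hx
    have hf' : ContDiffOn ℝ (l.length + 1 : ℕ) f U := by exact_mod_cast hf
    have hg' : ContDiffOn ℝ (l.length + 1 : ℕ) g U := by exact_mod_cast hg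
    have hfl : ContDiffOn ℝ (l.length : ℕ) f U := hf'.of_le (by exact_mod_cast Nat.le_succ _)
    have hgl : ContDiffOn ℝ (l.length : ℕ) g U := hg'.of_le (by exact_mod_cast Nat.le_succ _)
    rw [mpartial_cons]
    set v := EuclideanSpace.single i (1:ℝ) with hv
    have hdf := fderiv_contDiffOn_open hU hf' v
    have hdg := fderiv_contDiffOn_open hU hg' v
    have key : ∀ y ∈ U, fderiv ℝ (fun y => f y * g y) y v
        = fderiv ℝ f y v * g y + f y * fderiv ℝ g y v := by
      intro y hy
      rw [fderiv_fun_mul (diffAt_of_contDiffOn_open hU hf' hy) (diffAt_of_contDiffOn_open hU hg' hy)]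
      simp [smul_eq_mul]
      ring
    have step1 : mpartial l (fun y => fderiv ℝ (fun y => f y * g y) y v) x
        = mpartial l (fun y => fderiv ℝ f y v * g y + f y * fderiv ℝ g y v) x :=
      mpartial_congr_open hU l _ _ key x hx
    have step2 : mpartial l (fun y => fderiv ℝ f y v * g y + f y * fderiv ℝ g y v) x
        = mpartial l (fun y => fderiv ℝ f y v * g y) x
          + mpartial l (fun y => f y * fderiv ℝ g y v) x :=
      mpartial_add_open hU l _ _ (hdf.mul hgl) (hfl.mul hdg) x hx
    have step3 : mpartial l (fun y => fderiv ℝ f y v * g y) x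
        = ((splits l).map (fun p => mpartial p.1 (fun y => fderiv ℝ f y v) x
            * mpartial p.2 g x)).sum := ih _ _ hdf hgl x hx
    have step4 : mpartial l (fun y => f y * fderiv ℝ g y v) x
        = ((splits l).map (fun p => mpartial p.1 f x
            * mpartial p.2 (fun y => fderiv ℝ g y v) x)).sum := ih _ _ hfl hdg x hx
    rw [step1, step2, step3, step4]
    show _ = ((splits (i :: l)).map (fun p => mpartial p.1 f x * mpartial p.2 g x)).sum
    rw [show splits (i :: l) = (splits l).map (fun p => (i :: p.1, p.2))
      ++ (splits l).map (fun p => (p.1, i :: p.2)) from rfl]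
    rw [List.map_append, List.sum_append, List.map_map, List.map_map]
    congr 1


lemma mpartial_smul_comp_smul :
    ∀ (a : List (Fin d)) (c : ℝ) (μ : ℂ) (f : EuclideanSpace ℝ (Fin d) → ℂ),
      ContDiff ℝ (a.length : ℕ) f → ∀ x,
      mpartial a (fun y => μ • f (c • y)) x
        = (μ * (c : ℂ) ^ a.length) • mpartial a f (c • x) := by
  intro a
  induction a with
  | nil => intro c μ f _ x; simp [mpartial]
  | cons i a ih =>
    intro c μ f hf x
    have hf' : ContDiff ℝ (a.length + 1 : ℕ) f := by exact_mod_cast hf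
    have hdiff : Differentiable ℝ f := hf'.differentiable (by simp)
    rw [mpartial_cons]
    set v := EuclideanSpace.single i (1:ℝ) with hv
    set F : EuclideanSpace ℝ (Fin d) → ℂ := fun y => fderiv ℝ f y v with hF
    have hFsmooth : ContDiff ℝ (a.length : ℕ) F := by
      have h1 : ContDiff ℝ (a.length : ℕ) (fderiv ℝ f) := by
        apply hf'.fderiv_right
        push_cast
        exact le_refl _
      exact h1.clm_apply contDiff_const
    have key : (fun y => fderiv ℝ (fun y => μ • f (c • y)) y v)
        = fun y => (μ * c) • F (c • y) := by
      funext y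
      have hL : HasFDerivAt (fun z : EuclideanSpace ℝ (Fin d) => c • z)
          (c • ContinuousLinearMap.id ℝ (EuclideanSpace ℝ (Fin d))) y := by
        exact (hasFDerivAt_id y).const_smul c
      have h2 : HasFDerivAt (fun y => f (c • y))
          ((fderiv ℝ f (c • y)).comp (c • ContinuousLinearMap.id ℝ (EuclideanSpace ℝ (Fin d)))) y :=
        (hdiff (c • y)).hasFDerivAt.comp y hL
      have h3 := (h2.const_smul μ).fderiv
      rw [show (fun y => μ • f (c • y)) = μ • (fun y => f (c • y)) from rfl, h3]
      simp [hF, smul_smul, mul_comm, mul_assoc]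
    rw [key, ih c (μ * c) F hFsmooth x]
    rw [mpartial_cons]
    simp only [List.length_cons]
    have : mpartial a F (c • x)
        = mpartial a (fun y => (fderiv ℝ f y) (EuclideanSpace.single i (1:ℝ))) (c • x) := rfl
    rw [this, pow_succ]
    ring_nf

lemma mpartial_ofReal :
    ∀ (a : List (Fin d)) (f : EuclideanSpace ℝ (Fin d) → ℝ),
      ContDiff ℝ (a.length : ℕ) f → ∀ x,
      mpartial a (fun y => (f y : ℂ)) x = ((mpartial a f x : ℝ) : ℂ) := by
  intro a
  induction a with
  | nil => intro f _ x; rfl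
  | cons i a ih =>
    intro f hf x
    have hf' : ContDiff ℝ (a.length + 1 : ℕ) f := by exact_mod_cast hf
    have hdiff : Differentiable ℝ f := hf'.differentiable (by simp)
    rw [mpartial_cons, mpartial_cons]
    set v := EuclideanSpace.single i (1:ℝ) with hv
    have key : (fun y => fderiv ℝ (fun y => (f y : ℂ)) y v)
        = fun y => ((fderiv ℝ f y v : ℝ) : ℂ) := by
      funext y
      have h2 : HasFDerivAt (fun y => (f y : ℂ))
          (Complex.ofRealCLM.comp (fderiv ℝ f y)) y :=
        Complex.ofRealCLM.hasFDerivAt.comp y (hdiff y).hasFDerivAt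
      rw [h2.fderiv]
      rfl
    rw [key]
    apply ih
    have h1 : ContDiff ℝ (a.length : ℕ) (fderiv ℝ f) := by
      apply hf'.fderiv_right
      push_cast
      exact le_refl _
    exact h1.clm_apply contDiff_const

lemma list_norm_sum_le (l : List ℂ) : ‖l.sum‖ ≤ (l.map norm).sum := by
  induction l with
  | nil => simp
  | cons a l ih =>
    simp only [List.sum_cons, List.map_cons]
    exact le_trans (norm_add_le _ _) (by linarith)

lemma exists_uniform_psi (k : ℕ) (γ : ℝ) (ψ : EuclideanSpace ℝ (Fin d) → ℂ)
    (hψ0 : ∀ α : List (Fin d), α.length ≤ k → ∃ C : ℝ, ∀ ξ, 0 < ‖ξ‖ → ‖ξ‖ ≤ 1 →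
      ‖ξ‖ ^ ((α.length : ℝ) - γ) * ‖mpartial α ψ ξ‖ ≤ C) :
    ∀ (L : List (List (Fin d) × List (Fin d))), (∀ p ∈ L, p.2.length ≤ k) →
      ∃ C : ℝ, 0 ≤ C ∧ ∀ p ∈ L, ∀ ξ, 0 < ‖ξ‖ → ‖ξ‖ ≤ 1 →
        ‖mpartial p.2 ψ ξ‖ ≤ C * ‖ξ‖ ^ (γ - (p.2.length : ℝ)) := by
  intro L
  induction L with
  | nil => exact fun _ => ⟨0, le_refl _, by simp⟩
  | cons p L ih =>
    intro hL
    obtain ⟨C', hC'0, hC'⟩ := ih (fun q hq => hL q (List.mem_cons_of_mem p hq))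
    obtain ⟨C, hC⟩ := hψ0 p.2 (hL p List.mem_cons_self)
    refine ⟨max (max C 0) C', le_trans (le_max_right C 0) (le_max_left _ _), ?_⟩
    intro q hq ξ hξ1 hξ2
    rcases List.mem_cons.mp hq with rfl | hq
    · have h2 := hC ξ hξ1 hξ2
      have hpow : (0:ℝ) < ‖ξ‖ ^ (γ - (q.2.length : ℝ)) := Real.rpow_pos_of_pos hξ1 _
      have key : ‖mpartial q.2 ψ ξ‖
          = (‖ξ‖ ^ ((q.2.length : ℝ) - γ) * ‖mpartial q.2 ψ ξ‖) * ‖ξ‖ ^ (γ - (q.2.length : ℝ)) := by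
        rw [mul_comm (‖ξ‖ ^ ((q.2.length : ℝ) - γ)) _, mul_assoc, ← Real.rpow_add hξ1]
        simp
      rw [key]
      calc (‖ξ‖ ^ ((q.2.length : ℝ) - γ) * ‖mpartial q.2 ψ ξ‖) * ‖ξ‖ ^ (γ - (q.2.length : ℝ))
          ≤ C * ‖ξ‖ ^ (γ - (q.2.length : ℝ)) := mul_le_mul_of_nonneg_right h2 hpow.le
        _ ≤ max (max C 0) C' * ‖ξ‖ ^ (γ - (q.2.length : ℝ)) := by
            apply mul_le_mul_of_nonneg_right _ hpow.le
            exact le_trans (le_max_left C 0) (le_max_left _ _)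
    · exact le_trans (hC' q hq ξ hξ1 hξ2)
        (mul_le_mul_of_nonneg_right (le_max_right _ _) (Real.rpow_pos_of_pos hξ1 _).le)

lemma G_bound (k : ℕ) (h : EuclideanSpace ℝ (Fin d) → ℝ) (hsmooth : ContDiff ℝ (k : ℕ) h)
    (hCk : ∀ α : List (Fin d), α.length ≤ k → ∀ x, ‖mpartial α h x‖ ≤ 1)
    (n : ℕ) (a : List (Fin d)) (ha : a.length ≤ k) (ξ : EuclideanSpace ℝ (Fin d)) :
    ‖mpartial a (fun y => ((h ((n:ℝ) • y) : ℝ) : ℂ) - 1) ξ‖ ≤ 2 * (n:ℝ) ^ a.length := by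
  set hc : EuclideanSpace ℝ (Fin d) → ℂ := fun z => ((h z : ℝ) : ℂ) with hhc
  match a, ha with
  | [], _ =>
    show ‖hc ((n:ℝ) • ξ) - 1‖ ≤ 2 * (n:ℝ) ^ (0:ℕ)
    rw [pow_zero, mul_one]
    refine le_trans (norm_sub_le _ _) ?_
    have h1 : ‖hc ((n:ℝ) • ξ)‖ ≤ 1 := by
      rw [hhc]
      simp only [Complex.norm_real]
      exact hCk [] (Nat.zero_le k) _
    calc ‖hc ((n:ℝ) • ξ)‖ + ‖(1:ℂ)‖ ≤ 1 + 1 := by simpa using h1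
      _ = 2 := by norm_num
  | (j :: a'), ha =>
    have hlen : ((j :: a').length : WithTop ℕ∞) ≤ (k : ℕ) := by exact_mod_cast ha
    have hcsmooth : ContDiff ℝ ((j :: a').length : ℕ) hc :=
      (Complex.ofRealCLM.contDiff.comp (hsmooth.of_le hlen))
    have e1 : (fun y => (1:ℂ) • hc ((n:ℝ) • y)) = fun y => hc ((n:ℝ) • y) := by
      funext y; rw [one_smul]
    have step0 : mpartial (j :: a') (fun y => hc ((n:ℝ) • y) - 1) ξ
        = mpartial (j :: a') (fun y => (1:ℂ) • hc ((n:ℝ) • y)) ξ := by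
      rw [mpartial_cons, mpartial_cons]
      congr 1
      funext y
      rw [e1, fderiv_sub_const]
    rw [show (fun y => ((h ((n:ℝ) • y) : ℝ) : ℂ) - 1) = (fun y => hc ((n:ℝ) • y) - 1) from rfl,
      step0, mpartial_smul_comp_smul (j :: a') (n:ℝ) 1 hc hcsmooth ξ]
    rw [norm_smul]
    have h2 : ‖mpartial (j :: a') hc ((n:ℝ) • ξ)‖ ≤ 1 := by
      rw [hhc, mpartial_ofReal (j :: a') h (hsmooth.of_le hlen) _]
      simp only [Complex.norm_real]
      exact hCk _ ha _
    have h3 : ‖(1:ℂ) * ((n:ℝ):ℂ) ^ (j :: a').length‖ = (n:ℝ) ^ (j :: a').length := by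
      rw [one_mul]
      norm_num
    rw [h3]
    have h4 : (0:ℝ) ≤ (n:ℝ) ^ (j :: a').length := by positivity
    nlinarith


/-- Cutoff approximation (Step 2 of the proof of Theorem 2.1): with `h` a `C^k`
cutoff vanishing at `0`, equal to `1` outside a ball, with `C^k_b`-norm `≤ 1`
and `|∂^α h(x)| ≤ |x|^{k−|α|+1}`, and `ψ ∈ C^k(ℝ^d \ {0})` with the stated
bounds near the origin (with exponent `γ > 0`) and at infinity (index `s > 0`),
the functions `ψ_n(ξ) = h(nξ)ψ(ξ)` satisfy
`sup_{ξ ≠ 0} |ξ|^{|α|} |∂^α(ψ_n − ψ)(ξ)| → 0` for every `|α| ≤ k`. -/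
theorem cutoff_approximation (d k : ℕ) (R γ s : ℝ) (hR : 0 < R) (hγ : 0 < γ) (hs : 0 < s)
    (h : EuclideanSpace ℝ (Fin d) → ℝ)
    (hsmooth : ContDiff ℝ k h)
    (h0 : h 0 = 0)
    (h1 : ∀ x, R ≤ ‖x‖ → h x = 1)
    (hCk : ∀ α : List (Fin d), α.length ≤ k → ∀ x, ‖mpartial α h x‖ ≤ 1)
    (hdecay : ∀ α : List (Fin d), α.length ≤ k → ∀ x,
      ‖mpartial α h x‖ ≤ ‖x‖ ^ ((k : ℝ) - α.length + 1))
    (ψ : EuclideanSpace ℝ (Fin d) → ℂ)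
    (hψsmooth : ContDiffOn ℝ k ψ {(0 : EuclideanSpace ℝ (Fin d))}ᶜ)
    (hψ0 : ∀ α : List (Fin d), α.length ≤ k → ∃ C : ℝ, ∀ ξ, 0 < ‖ξ‖ → ‖ξ‖ ≤ 1 →
      ‖ξ‖ ^ ((α.length : ℝ) - γ) * ‖mpartial α ψ ξ‖ ≤ C)
    (hψInf : ∀ α : List (Fin d), α.length ≤ k → ∃ C : ℝ, ∀ ξ, 1 ≤ ‖ξ‖ →
      (1 + ‖ξ‖ ^ 2) ^ (((α.length : ℝ) - s) / 2) * ‖mpartial α ψ ξ‖ ≤ C) :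
    ∀ α : List (Fin d), α.length ≤ k → ∀ ε : ℝ, 0 < ε → ∃ N : ℕ, ∀ n : ℕ, N ≤ n →
      ∀ ξ : EuclideanSpace ℝ (Fin d), ξ ≠ 0 →
        ‖ξ‖ ^ (α.length : ℝ) *
          ‖mpartial α (fun ξ' => ((h ((n : ℝ) • ξ') : ℂ) * ψ ξ' - ψ ξ')) ξ‖ ≤ ε := by
  intro α hαk ε hε
  set U : Set (EuclideanSpace ℝ (Fin d)) := {(0 : EuclideanSpace ℝ (Fin d))}ᶜ with hU
  have hUopen : IsOpen U := isOpen_compl_singleton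
  set hc : EuclideanSpace ℝ (Fin d) → ℂ := fun z => ((h z : ℝ) : ℂ) with hhc
  -- uniform constant for ψ near the origin
  obtain ⟨C, hC0, hC⟩ := exists_uniform_psi k γ ψ hψ0 (splits α)
    (fun p hp => by have := splits_len p hp; omega)
  set D : ℕ := (splits α).length with hD
  set M : ℝ := (max 1 R) ^ k with hM
  have hM1 : (1:ℝ) ≤ M := one_le_pow₀ (le_max_left 1 R)
  have hM0 : (0:ℝ) < M := lt_of_lt_of_le one_pos hM1
  set K : ℝ := D * (2 * C * M) with hK
  have hK0 : 0 ≤ K := by positivity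
  set K' : ℝ := max K 1 with hK'
  have hK'pos : (0:ℝ) < K' := lt_of_lt_of_le one_pos (le_max_right K 1)
  set δ : ℝ := ε / K' with hδdef
  have hδ : 0 < δ := div_pos hε hK'pos
  have hδγ : (0:ℝ) < δ ^ (γ⁻¹) := Real.rpow_pos_of_pos hδ _
  refine ⟨max (⌈R / δ ^ (γ⁻¹)⌉₊ + 1) (⌈R⌉₊ + 1), ?_⟩
  intro n hn ξ hξ0
  have hn2 : (⌈R⌉₊ + 1 : ℕ) ≤ n := le_trans (le_max_right _ _) hn
  have hn3 : (⌈R / δ ^ (γ⁻¹)⌉₊ + 1 : ℕ) ≤ n := le_trans (le_max_left _ _) hn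
  have hnR : R < (n:ℝ) := by
    calc R ≤ (⌈R⌉₊ : ℝ) := Nat.le_ceil R
      _ < (⌈R⌉₊ : ℝ) + 1 := by linarith
      _ ≤ (n:ℝ) := by exact_mod_cast hn2
  have hnpos : (0:ℝ) < (n:ℝ) := lt_trans hR hnR
  have hξU : ξ ∈ U := by simpa [hU] using hξ0
  have hξpos : 0 < ‖ξ‖ := norm_pos_iff.mpr hξ0
  -- rewrite the function
  have hfun : (fun ξ' => ((h ((n : ℝ) • ξ') : ℂ) * ψ ξ' - ψ ξ'))
      = fun ξ' => (hc ((n:ℝ) • ξ') - 1) * ψ ξ' := by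
    funext ξ'; rw [hhc]; ring
  rw [hfun]
  set G : EuclideanSpace ℝ (Fin d) → ℂ := fun ξ' => hc ((n:ℝ) • ξ') - 1 with hG
  by_cases hcase : ‖ξ‖ ≤ R / n
  · -- small ξ : Leibniz estimate
    have hRn1 : R / n ≤ 1 := by
      rw [div_le_one hnpos]; exact hnR.le
    have hξ1 : ‖ξ‖ ≤ 1 := le_trans hcase hRn1
    have hcastk : ((α.length : ℕ) : WithTop ℕ∞) ≤ (k : ℕ) := by exact_mod_cast hαk
    have hGsmooth : ContDiffOn ℝ (α.length : ℕ) G U := by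
      have hlin : ContDiff ℝ (α.length : ℕ)
          (fun ξ' : EuclideanSpace ℝ (Fin d) => (n:ℝ) • ξ') :=
        (contDiff_const_smul _)
      have : ContDiff ℝ (α.length : ℕ) (fun ξ' : EuclideanSpace ℝ (Fin d) => hc ((n:ℝ) • ξ')) :=
        (Complex.ofRealCLM.contDiff.comp (hsmooth.of_le hcastk)).comp hlin
      exact (this.sub contDiff_const).contDiffOn
    have hψα : ContDiffOn ℝ (α.length : ℕ) ψ U := hψsmooth.of_le hcastk
    rw [mpartial_mul_open hUopen α G ψ hGsmooth hψα ξ hξU]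
    -- per-term bound
    set T : ℝ := 2 * C * M * (R / n) ^ γ with hT
    have hRnpos : 0 < R / n := div_pos hR hnpos
    have hterm : ∀ p ∈ splits α,
        ‖ξ‖ ^ ((α.length : ℕ) : ℝ) * ‖mpartial p.1 G ξ * mpartial p.2 ψ ξ‖ ≤ T := by
      intro p hp
      have hlenp := splits_len p hp
      have hp1k : p.1.length ≤ k := by omega
      have hbG : ‖mpartial p.1 G ξ‖ ≤ 2 * (n:ℝ) ^ p.1.length :=
        G_bound k h hsmooth hCk n p.1 hp1k ξ
      have hbψ : ‖mpartial p.2 ψ ξ‖ ≤ C * ‖ξ‖ ^ (γ - (p.2.length : ℝ)) :=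
        hC p hp ξ hξpos hξ1
      have hGn0 : (0:ℝ) ≤ 2 * (n:ℝ) ^ p.1.length := by positivity
      have hmulb : ‖mpartial p.1 G ξ * mpartial p.2 ψ ξ‖
          ≤ (2 * (n:ℝ) ^ p.1.length) * (C * ‖ξ‖ ^ (γ - (p.2.length : ℝ))) := by
        rw [norm_mul]
        exact mul_le_mul hbG hbψ (norm_nonneg _) hGn0
      have hstep : ‖ξ‖ ^ ((α.length : ℕ) : ℝ) * ‖mpartial p.1 G ξ * mpartial p.2 ψ ξ‖
          ≤ ‖ξ‖ ^ ((α.length : ℕ) : ℝ)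
            * ((2 * (n:ℝ) ^ p.1.length) * (C * ‖ξ‖ ^ (γ - (p.2.length : ℝ)))) :=
        mul_le_mul_of_nonneg_left hmulb (Real.rpow_nonneg (norm_nonneg _) _)
      refine le_trans hstep ?_
      -- combine the powers
      have hpowc : ‖ξ‖ ^ ((α.length : ℕ) : ℝ) * ‖ξ‖ ^ (γ - (p.2.length : ℝ))
          = ‖ξ‖ ^ (p.1.length : ℕ) * ‖ξ‖ ^ γ := by
        rw [← Real.rpow_natCast ‖ξ‖ p.1.length, ← Real.rpow_add hξpos, ← Real.rpow_add hξpos]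
        congr 1
        have : (α.length : ℝ) = (p.1.length : ℝ) + (p.2.length : ℝ) := by exact_mod_cast hlenp.symm
        rw [this]; ring
      have heq : ‖ξ‖ ^ ((α.length : ℕ) : ℝ)
            * ((2 * (n:ℝ) ^ p.1.length) * (C * ‖ξ‖ ^ (γ - (p.2.length : ℝ))))
          = 2 * C * (((n:ℝ) * ‖ξ‖) ^ p.1.length * ‖ξ‖ ^ γ) := by
        calc ‖ξ‖ ^ ((α.length : ℕ) : ℝ)
              * ((2 * (n:ℝ) ^ p.1.length) * (C * ‖ξ‖ ^ (γ - (p.2.length : ℝ))))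
            = 2 * C * (n:ℝ) ^ p.1.length
              * (‖ξ‖ ^ ((α.length : ℕ) : ℝ) * ‖ξ‖ ^ (γ - (p.2.length : ℝ))) := by ring
          _ = 2 * C * (n:ℝ) ^ p.1.length * (‖ξ‖ ^ (p.1.length : ℕ) * ‖ξ‖ ^ γ) := by rw [hpowc]
          _ = 2 * C * (((n:ℝ) * ‖ξ‖) ^ p.1.length * ‖ξ‖ ^ γ) := by rw [mul_pow]; ring
      rw [heq, hT]
      -- now bound (n‖ξ‖)^|p.1| ≤ M and ‖ξ‖^γ ≤ (R/n)^γ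
      have hb1 : ((n:ℝ) * ‖ξ‖) ^ p.1.length ≤ M := by
        have hnx : (n:ℝ) * ‖ξ‖ ≤ R := by
          have := (le_div_iff₀ hnpos).mp hcase
          linarith
        have hnx0 : (0:ℝ) ≤ (n:ℝ) * ‖ξ‖ := by positivity
        calc ((n:ℝ) * ‖ξ‖) ^ p.1.length ≤ (max 1 R) ^ p.1.length :=
              pow_le_pow_left₀ hnx0 (le_trans hnx (le_max_right 1 R)) _
          _ ≤ (max 1 R) ^ k := pow_le_pow_right₀ (le_max_left 1 R) hp1k
      have hb2 : ‖ξ‖ ^ γ ≤ (R / n) ^ γ :=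
        Real.rpow_le_rpow (norm_nonneg _) hcase hγ.le
      have hb2' : (0:ℝ) ≤ ‖ξ‖ ^ γ := Real.rpow_nonneg (norm_nonneg _) _
      have hMp : (0:ℝ) ≤ ((n:ℝ) * ‖ξ‖) ^ p.1.length := by positivity
      calc 2 * C * (((n:ℝ) * ‖ξ‖) ^ p.1.length * ‖ξ‖ ^ γ)
          ≤ 2 * C * (M * (R / n) ^ γ) := by
            apply mul_le_mul_of_nonneg_left _ (by positivity)
            exact mul_le_mul hb1 hb2 hb2' hM0.le
        _ = 2 * C * M * (R / ↑n) ^ γ := by ring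
    -- sum the terms
    have hsum1 : ‖((splits α).map (fun p => mpartial p.1 G ξ * mpartial p.2 ψ ξ)).sum‖
        ≤ ((splits α).map (fun p => ‖mpartial p.1 G ξ * mpartial p.2 ψ ξ‖)).sum := by
      refine le_trans (list_norm_sum_le _) (le_of_eq ?_)
      rw [List.map_map]
      rfl
    have hA0 : (0:ℝ) ≤ ‖ξ‖ ^ ((α.length : ℕ) : ℝ) := Real.rpow_nonneg (norm_nonneg _) _
    have hsum2 : ‖ξ‖ ^ ((α.length : ℕ) : ℝ)
        * ((splits α).map (fun p => ‖mpartial p.1 G ξ * mpartial p.2 ψ ξ‖)).sum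
        = ((splits α).map (fun p =>
            ‖ξ‖ ^ ((α.length : ℕ) : ℝ) * ‖mpartial p.1 G ξ * mpartial p.2 ψ ξ‖)).sum :=
      (List.sum_map_mul_left _ _ _).symm
    have hsum3 : ((splits α).map (fun p =>
            ‖ξ‖ ^ ((α.length : ℕ) : ℝ) * ‖mpartial p.1 G ξ * mpartial p.2 ψ ξ‖)).sum
        ≤ (D : ℝ) * T := by
      have := List.sum_le_card_nsmul ((splits α).map (fun p =>
            ‖ξ‖ ^ ((α.length : ℕ) : ℝ) * ‖mpartial p.1 G ξ * mpartial p.2 ψ ξ‖)) T ?_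
      · simpa [hD, nsmul_eq_mul] using this
      · intro x hx
        obtain ⟨p, hp, rfl⟩ := List.mem_map.mp hx
        exact hterm p hp
    have hfinal : (D : ℝ) * T ≤ ε := by
      have hRnδ : R / n ≤ δ ^ (γ⁻¹) := by
        rw [div_le_iff₀ hnpos]
        have hceil : R / δ ^ (γ⁻¹) ≤ (n : ℝ) := by
          calc R / δ ^ (γ⁻¹) ≤ (⌈R / δ ^ (γ⁻¹)⌉₊ : ℝ) := Nat.le_ceil _
            _ ≤ (n:ℝ) := by exact_mod_cast Nat.le_of_succ_le hn3
        calc R = δ ^ (γ⁻¹) * (R / δ ^ (γ⁻¹)) := by field_simp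
          _ ≤ δ ^ (γ⁻¹) * (n:ℝ) := mul_le_mul_of_nonneg_left hceil hδγ.le
      have hbδ : (R / n) ^ γ ≤ δ := by
        calc (R / n) ^ γ ≤ (δ ^ (γ⁻¹)) ^ γ :=
              Real.rpow_le_rpow hRnpos.le hRnδ hγ.le
          _ = δ := Real.rpow_inv_rpow hδ.le hγ.ne'
      have e1 : (D : ℝ) * T = K * (R / n) ^ γ := by rw [hT, hK]; ring
      rw [e1]
      calc K * (R / n) ^ γ ≤ K' * (R / n) ^ γ :=
            mul_le_mul_of_nonneg_right (le_max_left K 1) (Real.rpow_nonneg hRnpos.le _)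
        _ ≤ K' * δ := mul_le_mul_of_nonneg_left hbδ hK'pos.le
        _ = ε := by rw [hδdef]; field_simp
    calc ‖ξ‖ ^ ((α.length : ℕ) : ℝ)
          * ‖((splits α).map (fun p => mpartial p.1 G ξ * mpartial p.2 ψ ξ)).sum‖
        ≤ ‖ξ‖ ^ ((α.length : ℕ) : ℝ)
          * ((splits α).map (fun p => ‖mpartial p.1 G ξ * mpartial p.2 ψ ξ‖)).sum :=
          mul_le_mul_of_nonneg_left hsum1 hA0
      _ = _ := hsum2
      _ ≤ (D : ℝ) * T := hsum3
      _ ≤ ε := hfinal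
  · -- large ξ : the function vanishes near ξ
    set V : Set (EuclideanSpace ℝ (Fin d)) := {x | R / (n:ℝ) < ‖x‖} with hVdef
    have hVopen : IsOpen V := isOpen_lt continuous_const continuous_norm
    have hξV : ξ ∈ V := lt_of_not_ge hcase
    have hzero : ∀ x ∈ V, G x * ψ x = (fun _ => (0:ℂ)) x := by
      intro x hx
      have hx' : R / (n:ℝ) < ‖x‖ := hx
      have hRx : R ≤ ‖(n:ℝ) • x‖ := by
        rw [norm_smul]
        have : R < ‖x‖ * n := (div_lt_iff₀ hnpos).mp hx'
        have hn' : ‖(n:ℝ)‖ = (n:ℝ) := by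
          rw [Real.norm_eq_abs, abs_of_nonneg hnpos.le]
        rw [hn']
        linarith
      have : h ((n:ℝ) • x) = 1 := h1 _ hRx
      show (hc ((n:ℝ) • x) - 1) * ψ x = 0
      rw [hhc]
      simp [this]
    have hz : mpartial α (fun ξ' => G ξ' * ψ ξ') ξ = 0 :=
      (mpartial_congr_open hVopen α _ _ hzero ξ hξV).trans (mpartial_zero α ξ)
    rw [hz]
    simp only [norm_zero, mul_zero]
    exact hε.le
end
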